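/- (Lemma: symmetry forces cardinality-dependent weights.) Let n, m ≥ 1, N = {1,…,n}, M = {1,…,m}, and suppose ψ satisfies 2D-linearity, 2D-dummy, and 2D-symmetry. For A ⊆ N, B ⊆ M, let W_{A,B} be the utility function with W_{A,B}(W₁,W₂) = 1 if W₁ = A and W₂ = B, and 0 otherwise. Then for all i₁, i₂ ∈ N, j₁, j₂ ∈ M, all S₁ ⊆ N∖{i₁}, S₂ ⊆ N∖{i₂} with |S₁| = |S₂|, and all F₁ ⊆ M∖{j₁}, F₂ ⊆ M∖{j₂} with |F₁| = |F₂|: ψ_{i₁j₁}(W_{S₁∪{i₁}, F₁∪{j₁}}) = ψ_{i₂j₂}(W_{S₂∪{i₂}, F₂∪{j₂}}). Equivalently, the weights p^{ij}_{S,F} := ψ_{ij}(W_{S∪{i}, F∪{j}}) depend only on the cardinalities |S| and |F|. -/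

import Mathlib

open Finset Nat

/-- Marginal contribution of block `(i,j)` to `(S,F)`:
`M_h^{i,j}(S,F) = h(S∪{i}, F∪{j}) + h(S,F) − h(S∪{i}, F) − h(S, F∪{j})`. -/
noncomputable def margin {n m : ℕ} (h : Finset (Fin n) → Finset (Fin m) → ℝ)
    (i : Fin n) (j : Fin m) (S : Finset (Fin n)) (F : Finset (Fin m)) : ℝ :=
  h (insert i S) (insert j F) + h S F - h (insert i S) F - h S (insert j F)

/-- Shapley weight `s!(n−s−1)!/n!`. -/
noncomputable def shapWeight (n s : ℕ) : ℝ := (s ! * (n - s - 1)! : ℕ) / (n ! : ℕ)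

/-- The two-dimensional Shapley value
`ψ²ᵈ_{ij}(h) = Σ_{S ⊆ N∖{i}} Σ_{F ⊆ M∖{j}} [|S|!(n−|S|−1)!/n!]·[|F|!(m−|F|−1)!/m!]·M_h^{i,j}(S,F)`. -/
noncomputable def psi2d {n m : ℕ} (h : Finset (Fin n) → Finset (Fin m) → ℝ)
    (i : Fin n) (j : Fin m) : ℝ :=
  ∑ S ∈ (univ \ {i}).powerset, ∑ F ∈ (univ \ {j}).powerset,
    shapWeight n S.card * shapWeight m F.card * margin h i j S F


/-- The Dirac game `W_{A,B}`: utility 1 exactly on the pair `(A,B)` and 0 elsewhere. -/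
noncomputable def dirac {n m : ℕ} (A : Finset (Fin n)) (B : Finset (Fin m)) :
    Finset (Fin n) → Finset (Fin m) → ℝ :=
  fun W₁ W₂ => if W₁ = A ∧ W₂ = B then 1 else 0


lemma exists_perm_mem_iff {k : ℕ} (A A' : Finset (Fin k)) (h : A.card = A'.card) :
    ∃ σ : Equiv.Perm (Fin k), ∀ x, σ x ∈ A' ↔ x ∈ A := by
  classical
  have hc : (Aᶜ).card = (A'ᶜ).card := by simp [Finset.card_compl, h]
  let e : {x // x ∈ A} ≃ {x // x ∈ A'} := Finset.equivOfCardEq h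
  let e' : {x // ¬ x ∈ A} ≃ {x // ¬ x ∈ A'} :=
    ((Equiv.subtypeEquivRight (fun x => (Finset.mem_compl).symm)).trans
      (Finset.equivOfCardEq hc)).trans
      (Equiv.subtypeEquivRight (fun x => Finset.mem_compl))
  refine ⟨(Equiv.sumCompl (· ∈ A)).symm.trans ((e.sumCongr e').trans
    (Equiv.sumCompl (· ∈ A'))), fun x => ?_⟩
  by_cases hx : x ∈ A
  · simp only [Equiv.trans_apply, Equiv.sumCompl_symm_apply_of_pos hx,
      Equiv.sumCongr_apply, Sum.map_inl, Equiv.sumCompl_apply_inl]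
    exact iff_of_true (e ⟨x, hx⟩).2 hx
  · simp only [Equiv.trans_apply, Equiv.sumCompl_symm_apply_of_neg hx,
      Equiv.sumCongr_apply, Sum.map_inr, Equiv.sumCompl_apply_inr]
    exact iff_of_false (e' ⟨x, hx⟩).2 hx

lemma perm_image_eq {k : ℕ} {A A' : Finset (Fin k)} {σ : Equiv.Perm (Fin k)}
    (hσ : ∀ x, σ x ∈ A' ↔ x ∈ A) : A.image σ = A' := by
  apply Finset.eq_of_subset_of_card_le
  · intro y hy
    obtain ⟨x, hx, rfl⟩ := Finset.mem_image.mp hy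
    exact (hσ x).mpr hx
  · have : A.card = A'.card := by
      have h1 : A'.image σ.symm = A := by
        ext x
        simp only [Finset.mem_image]
        constructor
        · rintro ⟨y, hy, rfl⟩
          exact (hσ _).mp (by simpa using hy)
        · intro hx
          exact ⟨σ x, (hσ x).mpr hx, by simp⟩
      calc A.card = (A'.image σ.symm).card := by rw [h1]
        _ = A'.card := Finset.card_image_of_injective _ σ.symm.injective
    rw [Finset.card_image_of_injective _ σ.injective, this]

lemma swap_image_eq {k : ℕ} {A : Finset (Fin k)} {a b : Fin k} (h : a ∈ A ↔ b ∈ A) :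
    A.image (Equiv.swap a b) = A := by
  ext y
  simp only [Finset.mem_image]
  constructor
  · rintro ⟨x, hx, rfl⟩
    rcases eq_or_ne x a with rfl | ha
    · simpa [Equiv.swap_apply_left] using h.mp hx
    rcases eq_or_ne x b with rfl | hb
    · simpa [Equiv.swap_apply_right] using h.mpr hx
    · rwa [Equiv.swap_apply_of_ne_of_ne ha hb]
  · intro hy
    refine ⟨Equiv.swap a b y, ?_, by simp⟩
    rcases eq_or_ne y a with rfl | ha
    · simpa [Equiv.swap_apply_left] using h.mp hy
    rcases eq_or_ne y b with rfl | hb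
    · simpa [Equiv.swap_apply_right] using h.mpr hy
    · rwa [Equiv.swap_apply_of_ne_of_ne ha hb]

lemma exists_perm_image_point {k : ℕ} (A A' : Finset (Fin k)) (x x' : Fin k)
    (hcard : A.card = A'.card) (hmem : (x' ∈ A ↔ x ∈ A')) :
    ∃ g : Equiv.Perm (Fin k), A.image g = A' ∧ g x' = x := by
  obtain ⟨σ, hσ⟩ := exists_perm_mem_iff A A' hcard
  refine ⟨σ.trans (Equiv.swap (σ x') x), ?_, by simp [Equiv.swap_apply_left]⟩
  have h1 : σ x' ∈ A' ↔ x ∈ A' := (hσ x').trans hmem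
  calc A.image (σ.trans (Equiv.swap (σ x') x))
      = (A.image σ).image (Equiv.swap (σ x') x) := by
        rw [Finset.image_image]; rfl
    _ = A'.image (Equiv.swap (σ x') x) := by rw [perm_image_eq hσ]
    _ = A' := swap_image_eq h1

lemma dirac_link {n m : ℕ}
    (ψ : (Finset (Fin n) → Finset (Fin m) → ℝ) → Fin n → Fin m → ℝ)
    (hsym : ∀ (h : Finset (Fin n) → Finset (Fin m) → ℝ)
      (π₁ : Equiv.Perm (Fin n)) (π₂ : Equiv.Perm (Fin m)) (i : Fin n) (j : Fin m),
      ψ (fun S F => h (S.image π₁) (F.image π₂)) (π₁ i) (π₂ j) = ψ h i j)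
    (A A' : Finset (Fin n)) (B B' : Finset (Fin m)) (x x' : Fin n) (y y' : Fin m)
    (hA : A.card = A'.card) (hB : B.card = B'.card)
    (hx : x' ∈ A ↔ x ∈ A') (hy : y' ∈ B ↔ y ∈ B') :
    ψ (dirac A B) x y = ψ (dirac A' B') x' y' := by
  obtain ⟨π₁, hπA, hπx⟩ := exists_perm_image_point A A' x x' hA hx
  obtain ⟨π₂, hπB, hπy⟩ := exists_perm_image_point B B' y y' hB hy
  have key := hsym (dirac A' B') π₁ π₂ x' y'
  have hfun : (fun S F => dirac A' B' (S.image π₁) (F.image π₂)) = dirac A B := by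
    funext S F
    simp only [dirac]
    congr 1
    have h1 : S.image π₁ = A' ↔ S = A := by
      rw [← hπA]
      exact (Finset.image_injective π₁.injective).eq_iff
    have h2 : F.image π₂ = B' ↔ F = B := by
      rw [← hπB]
      exact (Finset.image_injective π₂.injective).eq_iff
    simp [h1, h2]
  rw [hfun, hπx, hπy] at key
  exact key


/-- Lemma: under 2D-linearity, 2D-dummy and 2D-symmetry, the weights
`p^{ij}_{S,F} = ψ_{ij}(W_{S∪{i},F∪{j}})` depend only on the cardinalities `|S|` and `|F|`. -/
theorem symmetry_weights_cardinality {n m : ℕ} (hn : 1 ≤ n) (hm : 1 ≤ m)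
    (ψ : (Finset (Fin n) → Finset (Fin m) → ℝ) → Fin n → Fin m → ℝ)
    (hlin : ∀ (h₁ h₂ : Finset (Fin n) → Finset (Fin m) → ℝ) (β₁ β₂ : ℝ)
      (i : Fin n) (j : Fin m),
      ψ (fun S F => β₁ * h₁ S F + β₂ * h₂ S F) i j = β₁ * ψ h₁ i j + β₂ * ψ h₂ i j)
    (hdummy : ∀ (h : Finset (Fin n) → Finset (Fin m) → ℝ) (i : Fin n) (j : Fin m) (c : ℝ),
      (∀ (S : Finset (Fin n)) (F : Finset (Fin m)), i ∉ S → j ∉ F →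
        margin h i j S F = c) → ψ h i j = c)
    (hsym : ∀ (h : Finset (Fin n) → Finset (Fin m) → ℝ)
      (π₁ : Equiv.Perm (Fin n)) (π₂ : Equiv.Perm (Fin m)) (i : Fin n) (j : Fin m),
      ψ (fun S F => h (S.image π₁) (F.image π₂)) (π₁ i) (π₂ j) = ψ h i j) :
    ∀ (i₁ i₂ : Fin n) (j₁ j₂ : Fin m)
      (S₁ S₂ : Finset (Fin n)) (F₁ F₂ : Finset (Fin m)),
      i₁ ∉ S₁ → i₂ ∉ S₂ → j₁ ∉ F₁ → j₂ ∉ F₂ →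
      S₁.card = S₂.card → F₁.card = F₂.card →
      ψ (dirac (insert i₁ S₁) (insert j₁ F₁)) i₁ j₁ =
        ψ (dirac (insert i₂ S₂) (insert j₂ F₂)) i₂ j₂ := by
  classical
  intro i₁ i₂ j₁ j₂ S₁ S₂ F₁ F₂ hi₁ hi₂ hj₁ hj₂ hS hF
  set A₁ := insert i₁ S₁ with hA₁
  set A₂ := insert i₂ S₂ with hA₂
  set B₁ := insert j₁ F₁ with hB₁
  set B₂ := insert j₂ F₂ with hB₂
  have hcardA : A₁.card = A₂.card := by
    rw [hA₁, hA₂, Finset.card_insert_of_notMem hi₁, Finset.card_insert_of_notMem hi₂, hS]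
  have hcardB : B₁.card = B₂.card := by
    rw [hB₁, hB₂, Finset.card_insert_of_notMem hj₁, Finset.card_insert_of_notMem hj₂, hF]
  have hi₁A : i₁ ∈ A₁ := Finset.mem_insert_self _ _
  have hi₂A : i₂ ∈ A₂ := Finset.mem_insert_self _ _
  have hj₁B : j₁ ∈ B₁ := Finset.mem_insert_self _ _
  have hj₂B : j₂ ∈ B₂ := Finset.mem_insert_self _ _
  obtain ⟨i₃, hi₃A, hi₃⟩ : ∃ i₃, i₃ ∈ A₁ ∧ (i₂ ∈ A₁ ↔ i₃ ∈ A₂) := by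
    by_cases h : i₂ ∈ A₁
    · exact ⟨i₂, h, iff_of_true h hi₂A⟩
    · have hns : ¬ A₁ ⊆ A₂ := by
        intro hs
        exact h (by rw [Finset.eq_of_subset_of_card_le hs (le_of_eq hcardA.symm)]; exact hi₂A)
      obtain ⟨i₃, h3, h4⟩ := Finset.not_subset.mp hns
      exact ⟨i₃, h3, iff_of_false h h4⟩
  obtain ⟨j₃, hj₃B, hj₃⟩ : ∃ j₃, j₃ ∈ B₁ ∧ (j₂ ∈ B₁ ↔ j₃ ∈ B₂) := by
    by_cases h : j₂ ∈ B₁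
    · exact ⟨j₂, h, iff_of_true h hj₂B⟩
    · have hns : ¬ B₁ ⊆ B₂ := by
        intro hs
        exact h (by rw [Finset.eq_of_subset_of_card_le hs (le_of_eq hcardB.symm)]; exact hj₂B)
      obtain ⟨j₃, h3, h4⟩ := Finset.not_subset.mp hns
      exact ⟨j₃, h3, iff_of_false h h4⟩
  calc ψ (dirac A₁ B₁) i₁ j₁
      = ψ (dirac A₁ B₁) i₃ j₃ :=
        dirac_link ψ hsym A₁ A₁ B₁ B₁ i₁ i₃ j₁ j₃ rfl rfl
          (iff_of_true hi₃A hi₁A) (iff_of_true hj₃B hj₁B)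
    _ = ψ (dirac A₂ B₂) i₂ j₂ :=
        dirac_link ψ hsym A₁ A₂ B₁ B₂ i₃ i₂ j₃ j₂ hcardA hcardB hi₃ hj₃
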